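/- Let n ≥ 3, m ≥ 1, t ≥ 1, and S_1, …, S_m be subsets of U = {u_1, …, u_n}, and let G(U,S) be the associated set-cover graph. If there exists a set W of at most t unordered pairs of distinct followers, disjoint from E(G(U,S)), such that in the graph G(U,S) ∪ W at least 4m + n(t+1) + t followers have core number at least 3, then there exists J ⊆ [m] with |J| ≤ t and ∪_{i∈J} S_i = U. -/

import Mathlib

/-- The degree of a vertex: the number of its neighbors. -/
noncomputable def deg {V : Type*} (G : SimpleGraph V) (v : V) : ℕ :=
  (G.neighborSet v).ncard

/-- The core number of a vertex `v`: the largest `k` such that `v` belongs to a subgraph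
in which every vertex has degree at least `k` within that subgraph (equivalently, an
induced subgraph with minimum degree at least `k`). -/
noncomputable def coreNumber {V : Type*} (G : SimpleGraph V) (v : V) : ℕ :=
  sSup {k : ℕ | ∃ s : Set V, v ∈ s ∧ ∀ w ∈ s, k ≤ (s ∩ G.neighborSet w).ncard}

/-- Vertices of the set-cover reduction graph `G(U,S)` (0-based indices): `X i j` is
`X_{i+1,j+1}`, `W i q` is `W_{i+1,q+1}` and `Z j q` is `Z_{j+1,q+1}` of the paper. -/
inductive SCV (m n : ℕ) where
  | X : Fin m → Fin n → SCV m n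
  | W : Fin m → Fin 5 → SCV m n
  | Z : Fin n → Fin 5 → SCV m n

/-- Generating relation of `G(U,S)`, where `Su i` is the set `S_{i+1} ⊆ U` (a set of
indices `j`, `u_{j+1} ∈ S_{i+1}` iff `j ∈ Su i`): the path `X_{i,2},…,X_{i,n}` plus the
edge `{X_{i,n},X_{i,1}}`; `W_{i,1}` joined to `W_{i,2}` and `W_{i,5}`; a clique on
`{W_{i,2},…,W_{i,5}}`; `{W_{i,1},X_{i,j}}` iff `u_j ∉ S_i`; `Z_{j,1}` joined to `Z_{j,2}`
and `Z_{j,5}`; a clique on `{Z_{j,2},…,Z_{j,5}}`; and `{X_{i,j},Z_{j,1}}` iff `u_j ∈ S_i`. -/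
def scRel {m n : ℕ} (Su : Fin m → Finset (Fin n)) : SCV m n → SCV m n → Prop
  | .X i j, .X i' j' => i = i' ∧
      ((1 ≤ j.val ∧ j'.val = j.val + 1) ∨ (j.val = n - 1 ∧ j'.val = 0))
  | .W i q, .W i' q' => i = i' ∧
      ((q.val = 0 ∧ (q'.val = 1 ∨ q'.val = 4)) ∨ (1 ≤ q.val ∧ 1 ≤ q'.val))
  | .W i q, .X i' j => i = i' ∧ q.val = 0 ∧ j ∉ Su i
  | .Z j q, .Z j' q' => j = j' ∧
      ((q.val = 0 ∧ (q'.val = 1 ∨ q'.val = 4)) ∨ (1 ≤ q.val ∧ 1 ≤ q'.val))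
  | .X i j, .Z j' q => j = j' ∧ q.val = 0 ∧ j ∈ Su i
  | _, _ => False

/-- The set-cover reduction graph `G(U,S)`. -/
def scGraph {m n : ℕ} (Su : Fin m → Finset (Fin n)) : SimpleGraph (SCV m n) :=
  SimpleGraph.fromRel (scRel Su)

/-- Followers of `G(U,S)`: all vertices except the leaders `Z_{j,q}`, `q ∈ {2,3,4,5}`. -/
def scFollower {m n : ℕ} : SCV m n → Prop
  | .Z _ q => q.val = 0
  | _ => True

/-! ### Auxiliary material -/


deriving instance DecidableEq for SCV
deriving instance Fintype for SCV

lemma coreNumber_ge_iff {V : Type*} [Fintype V] (G : SimpleGraph V) (v : V) (k : ℕ) :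
    k ≤ coreNumber G v ↔ ∃ s : Set V, v ∈ s ∧ ∀ w ∈ s, k ≤ (s ∩ G.neighborSet w).ncard := by
  set S := {k : ℕ | ∃ s : Set V, v ∈ s ∧ ∀ w ∈ s, k ≤ (s ∩ G.neighborSet w).ncard} with hS
  have hne : S.Nonempty := ⟨0, {v}, Set.mem_singleton v, fun w _ => Nat.zero_le _⟩
  have hbdd : BddAbove S := by
    refine ⟨Fintype.card V, fun k hk => ?_⟩
    obtain ⟨s, hv, hs⟩ := hk
    calc k ≤ (s ∩ G.neighborSet v).ncard := hs v hv
      _ ≤ (Set.univ : Set V).ncard := Set.ncard_le_ncard (Set.subset_univ _) Set.finite_univ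
      _ = Fintype.card V := by simp [Set.ncard_univ]
  constructor
  · intro h
    have hmem : sSup S ∈ S := Nat.sSup_mem hne hbdd
    obtain ⟨s, hv, hs⟩ := hmem
    exact ⟨s, hv, fun w hw => le_trans h (hs w hw)⟩
  · intro h
    exact le_csSup hbdd h

lemma Cprop {V : Type*} [Fintype V] (G : SimpleGraph V) (k : ℕ)
    (w : V) (hw : w ∈ {v | ∃ s : Set V, v ∈ s ∧ ∀ u ∈ s, k ≤ (s ∩ G.neighborSet u).ncard}) :
    k ≤ ({v | ∃ s : Set V, v ∈ s ∧ ∀ u ∈ s, k ≤ (s ∩ G.neighborSet u).ncard}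
      ∩ G.neighborSet w).ncard := by
  obtain ⟨s, hws, hs⟩ := hw
  refine le_trans (hs w hws) (Set.ncard_le_ncard ?_ (Set.toFinite _))
  intro u hu
  exact ⟨⟨s, hu.1, hs⟩, hu.2⟩

lemma hshake {V : Type*} [Fintype V] [DecidableEq V] (W : Finset (Sym2 V))
    (hdiag : ∀ e ∈ W, ¬ e.IsDiag) :
    ∑ v, ((SimpleGraph.fromEdgeSet (↑W : Set (Sym2 V))).neighborSet v).ncard = 2 * W.card := by
  classical
  set G := SimpleGraph.fromEdgeSet (↑W : Set (Sym2 V)) with hG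
  have h1 : ∀ v, (G.neighborSet v).ncard = G.degree v := fun v => by
    rw [Set.ncard_eq_toFinset_card', SimpleGraph.degree]
    congr 1
  have h2 : G.edgeFinset = W := by
    ext e
    simp only [SimpleGraph.mem_edgeFinset, hG, SimpleGraph.edgeSet_fromEdgeSet,
      Set.mem_diff, Finset.mem_coe, Set.mem_setOf_eq]
    exact ⟨fun h => h.1, fun h => ⟨h, hdiag e h⟩⟩
  calc ∑ v, (G.neighborSet v).ncard = ∑ v, G.degree v := by simp [h1]
    _ = 2 * G.edgeFinset.card := by
        have h := SimpleGraph.sum_degrees_eq_twice_card_edges G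
        convert h using 4
    _ = 2 * W.card := by rw [h2]

/-- position along the path `X_{i,1}, X_{i,n}, X_{i,n-1}, …, X_{i,2}`. -/
def pfun {n : ℕ} (j : Fin n) : ℕ := if j.val = 0 then 0 else n - j.val

lemma pfun_inj {n : ℕ} : Function.Injective (pfun (n := n)) := by
  intro j j' h
  unfold pfun at h
  have hj := j.isLt
  have hj' := j'.isLt
  apply Fin.ext
  by_cases h0 : j.val = 0 <;> by_cases h0' : j'.val = 0 <;> simp [h0, h0'] at h <;> omega

/-- attachment vertex of `X i j`. -/
def attach {m n : ℕ} (Su : Fin m → Finset (Fin n)) (i : Fin m) (j : Fin n) : SCV m n :=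
  if j ∈ Su i then SCV.Z j ⟨0, by omega⟩ else SCV.W i ⟨0, by omega⟩

open SCV in
lemma nbhd_X {m n : ℕ} (Su : Fin m → Finset (Fin n)) (i : Fin m) (j : Fin n) :
    (scGraph Su).neighborSet (X i j) ⊆
      (fun j' => X i j') '' {j' | pfun j = pfun j' + 1 ∨ pfun j' = pfun j + 1}
        ∪ {attach Su i j} := by
  intro w hw
  obtain ⟨hne, hrel⟩ := hw
  have hj := j.isLt
  cases w with
  | X i' j' =>
    have hj' := j'.isLt
    have hjj : j.val ≠ j'.val := fun h => (by
      rcases hrel with ⟨hi,_⟩|⟨hi,_⟩ <;> exact hne (by rw [hi] at *; exact congrArg _ (Fin.ext h)) : False)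
    left
    rcases hrel with ⟨hi, h⟩ | ⟨hi, h⟩
    · subst hi
      refine ⟨j', ?_, rfl⟩
      simp only [Set.mem_setOf_eq, pfun]
      rcases h with ⟨h1, h2⟩ | ⟨h1, h2⟩ <;> split_ifs <;> omega
    · subst hi
      refine ⟨j', ?_, rfl⟩
      simp only [Set.mem_setOf_eq, pfun]
      rcases h with ⟨h1, h2⟩ | ⟨h1, h2⟩ <;> split_ifs <;> omega
  | W i' q =>
    rcases hrel with h | ⟨hi, hq, hs⟩
    · exact absurd h (by simp [scRel])
    · subst hi
      right
      simp [attach, hs, show q = ⟨0, by omega⟩ from Fin.ext hq]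
  | Z j' q =>
    rcases hrel with ⟨hj', hq, hs⟩ | h
    · subst hj'
      right
      simp [attach, hs, show q = ⟨0, by omega⟩ from Fin.ext hq]
    · exact absurd h (by simp [scRel])

open SCV in
lemma nbhd_W0 {m n : ℕ} (Su : Fin m → Finset (Fin n)) (i : Fin m) :
    (scGraph Su).neighborSet (W i ⟨0, by omega⟩) ⊆
      {W i ⟨1, by omega⟩, W i ⟨4, by omega⟩} ∪ {w | ∃ j, w = X i j} := by
  intro w hw
  obtain ⟨hne, hrel⟩ := hw
  cases w with
  | X i' j =>
    rcases hrel with ⟨hi, _, _⟩ | h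
    · subst hi; right; exact ⟨j, rfl⟩
    · exact absurd h (by simp [scRel])
  | W i' q =>
    left
    rcases hrel with ⟨hi, h⟩ | ⟨hi, h⟩
    · subst hi
      rcases h with ⟨_, h1 | h1⟩ | ⟨h1, _⟩
      · left; exact congrArg _ (Fin.ext h1)
      · right; exact congrArg _ (Fin.ext h1)
      · simp at h1
    · subst hi
      rcases h with ⟨h1, h2 | h2⟩ | ⟨_, h1⟩ <;> simp at *
  | Z j q =>
    rcases hrel with h | h <;> exact absurd h (by simp [scRel])

open SCV in
lemma nbhd_Z0 {m n : ℕ} (Su : Fin m → Finset (Fin n)) (j : Fin n) :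
    (scGraph Su).neighborSet (Z j ⟨0, by omega⟩) ⊆
      {Z j ⟨1, by omega⟩, Z j ⟨4, by omega⟩} ∪ {w | ∃ i, w = X i j ∧ j ∈ Su i} := by
  intro w hw
  obtain ⟨hne, hrel⟩ := hw
  cases w with
  | X i j' =>
    rcases hrel with h | ⟨hj, _, hs⟩
    · exact absurd h (by simp [scRel])
    · subst hj; right; exact ⟨i, rfl, hs⟩
  | W i q =>
    rcases hrel with h | h <;> exact absurd h (by simp [scRel])
  | Z j' q =>
    left
    rcases hrel with ⟨hj, h⟩ | ⟨hj, h⟩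
    · subst hj
      rcases h with ⟨_, h1 | h1⟩ | ⟨h1, _⟩
      · left; exact congrArg _ (Fin.ext h1)
      · right; exact congrArg _ (Fin.ext h1)
      · simp at h1
    · subst hj
      rcases h with ⟨h1, h2 | h2⟩ | ⟨_, h1⟩ <;> simp at *

open SCV in
lemma row_lemma {m n : ℕ} (Su : Fin m → Finset (Fin n)) (C : Set (SCV m n))
    {i : Fin m} [DecidablePred fun j : Fin n => X i j ∈ C] (hex : ∃ j, X i j ∈ C) :
    2 ≤ ∑ j ∈ Finset.univ.filter (fun j : Fin n => X i j ∈ C),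
        (3 - (C ∩ (scGraph Su).neighborSet (X i j)).ncard) := by
  classical
  set Tf := Finset.univ.filter (fun j : Fin n => X i j ∈ C) with hTf
  have hTne : Tf.Nonempty := by
    obtain ⟨j, hj⟩ := hex
    exact ⟨j, by simp [hTf, hj]⟩
  obtain ⟨jmax, hmaxT, hmax⟩ := Tf.exists_max_image pfun hTne
  obtain ⟨jmin, hminT, hmin⟩ := Tf.exists_min_image pfun hTne
  have hmemT : ∀ j : Fin n, j ∈ Tf ↔ X i j ∈ C := by
    intro j; simp [hTf]
  have hub : ∀ jm : Fin n, X i jm ∈ C →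
      ((∀ j', X i j' ∈ C → pfun j' ≤ pfun jm) ∨ (∀ j', X i j' ∈ C → pfun jm ≤ pfun j')) →
      (C ∩ (scGraph Su).neighborSet (X i jm)).ncard ≤ 2 := by
    intro jm _ hext
    have hsub : C ∩ (scGraph Su).neighborSet (X i jm) ⊆
        insert (attach Su i jm) ((fun j' => X i j') ''
          {j' | X i j' ∈ C ∧ (pfun jm = pfun j' + 1 ∨ pfun j' = pfun jm + 1)}) := by
      intro w hw
      rcases nbhd_X Su i jm hw.2 with ⟨j', hj', rfl⟩ | hatt
      · exact Set.mem_insert_of_mem _ ⟨j', ⟨hw.1, hj'⟩, rfl⟩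
      · exact hatt ▸ Set.mem_insert _ _
    have hss : {j' | X i j' ∈ C ∧ (pfun jm = pfun j' + 1 ∨ pfun j' = pfun jm + 1)}.Subsingleton := by
      intro j1 h1 j2 h2
      apply pfun_inj
      rcases hext with hmx | hmn
      · have e1 := hmx j1 h1.1
        have e2 := hmx j2 h2.1
        rcases h1.2 with a1 | a1 <;> rcases h2.2 with a2 | a2 <;> omega
      · have e1 := hmn j1 h1.1
        have e2 := hmn j2 h2.1
        rcases h1.2 with a1 | a1 <;> rcases h2.2 with a2 | a2 <;> omega
    calc (C ∩ (scGraph Su).neighborSet (X i jm)).ncard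
        ≤ (insert (attach Su i jm) ((fun j' => X i j') ''
          {j' | X i j' ∈ C ∧ (pfun jm = pfun j' + 1 ∨ pfun j' = pfun jm + 1)})).ncard :=
          Set.ncard_le_ncard hsub (Set.toFinite _)
      _ ≤ ((fun j' => X i j') ''
          {j' | X i j' ∈ C ∧ (pfun jm = pfun j' + 1 ∨ pfun j' = pfun jm + 1)}).ncard + 1 :=
          Set.ncard_insert_le _ _
      _ ≤ 1 + 1 := by
          gcongr
          exact (Set.ncard_le_one (Set.toFinite _)).mpr (hss.image _)
      _ = 2 := rfl
  by_cases hone : jmin = jmax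
  · have hsing : ∀ j', X i j' ∈ C → j' = jmax := by
      intro j' hj'
      have h1 := hmax j' ((hmemT j').2 hj')
      have h2 := hmin j' ((hmemT j').2 hj')
      rw [hone] at h2
      exact pfun_inj (le_antisymm h1 h2)
    have hsub : C ∩ (scGraph Su).neighborSet (X i jmax) ⊆ {attach Su i jmax} := by
      intro w hw
      rcases nbhd_X Su i jmax hw.2 with ⟨j', hj', rfl⟩ | hatt
      · exfalso
        have := hsing j' hw.1
        subst this
        simp only [Set.mem_setOf_eq] at hj'
        omega
      · exact hatt
    have hn1 : (C ∩ (scGraph Su).neighborSet (X i jmax)).ncard ≤ 1 := by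
      calc _ ≤ ({attach Su i jmax} : Set (SCV m n)).ncard :=
            Set.ncard_le_ncard hsub (Set.toFinite _)
        _ = 1 := Set.ncard_singleton _
    calc 2 ≤ 3 - (C ∩ (scGraph Su).neighborSet (X i jmax)).ncard := by omega
      _ ≤ _ := Finset.single_le_sum (f := fun j => 3 - (C ∩ (scGraph Su).neighborSet (X i j)).ncard)
            (fun _ _ => Nat.zero_le _) hmaxT
  · have hmaxb := hub jmax ((hmemT jmax).1 hmaxT)
      (Or.inl fun j' hj' => hmax j' ((hmemT j').2 hj'))
    have hminb := hub jmin ((hmemT jmin).1 hminT)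
      (Or.inr fun j' hj' => hmin j' ((hmemT j').2 hj'))
    have hsubset : ({jmin, jmax} : Finset (Fin n)) ⊆ Tf := by
      intro x hx
      rcases Finset.mem_insert.1 hx with rfl | hx
      · exact hminT
      · exact (Finset.mem_singleton.1 hx) ▸ hmaxT
    have hpair : ∑ j ∈ ({jmin, jmax} : Finset (Fin n)),
            (3 - (C ∩ (scGraph Su).neighborSet (X i j)).ncard) =
            (3 - (C ∩ (scGraph Su).neighborSet (X i jmin)).ncard) +
            (3 - (C ∩ (scGraph Su).neighborSet (X i jmax)).ncard) :=
      Finset.sum_pair hone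
    have hle : ∑ j ∈ ({jmin, jmax} : Finset (Fin n)),
            (3 - (C ∩ (scGraph Su).neighborSet (X i j)).ncard) ≤
            ∑ j ∈ Tf, (3 - (C ∩ (scGraph Su).neighborSet (X i j)).ncard) :=
      Finset.sum_le_sum_of_subset hsubset
    omega

/-- Soundness direction of the NP-hardness reduction (Theorem 4): if adding at most `t`
non-edges between distinct followers makes at least `4m + n(t+1) + t` followers have core
number at least 3, then some at most `t` of the sets `S_i` cover `U`. -/
theorem stmt_12 {m n : ℕ} (hn : 3 ≤ n) (hm : 1 ≤ m) (t : ℕ) (ht : 1 ≤ t)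
    (Su : Fin m → Finset (Fin n))
    (W : Finset (Sym2 (SCV m n))) (hWcard : W.card ≤ t)
    (hdiag : ∀ e ∈ W, ¬ e.IsDiag)
    (hfol : ∀ e ∈ W, ∀ v ∈ e, scFollower v)
    (hnew : ∀ e ∈ W, e ∉ (scGraph Su).edgeSet)
    (hgood : 4 * m + n * (t + 1) + t ≤
      {v : SCV m n | scFollower v ∧
        3 ≤ coreNumber
          (scGraph Su ⊔ SimpleGraph.fromEdgeSet (↑W : Set (Sym2 (SCV m n)))) v}.ncard) :
    ∃ J : Finset (Fin m), J.card ≤ t ∧ ∀ j : Fin n, ∃ i ∈ J, j ∈ Su i := by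
  classical
  set H := scGraph Su ⊔ SimpleGraph.fromEdgeSet (↑W : Set (Sym2 (SCV m n))) with hH
  set C : Set (SCV m n) :=
    {v | ∃ s : Set (SCV m n), v ∈ s ∧ ∀ u ∈ s, 3 ≤ (s ∩ H.neighborSet u).ncard} with hCdef
  have hC : ∀ w ∈ C, 3 ≤ (C ∩ H.neighborSet w).ncard := fun w hw => Cprop H 3 w hw
  have hCiff : ∀ v : SCV m n, (3 ≤ coreNumber H v ↔ v ∈ C) := fun v => coreNumber_ge_iff H v 3
  set z5 : Fin 5 := ⟨0, by omega⟩ with hz5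
  set Pf : Finset (Fin m × Fin n) := Finset.univ.filter (fun p => SCV.X p.1 p.2 ∈ C) with hPf
  set Rf : Finset (Fin m) := Finset.univ.filter (fun i => ∃ j, SCV.X i j ∈ C) with hRf
  set W0f : Finset (Fin m) := Finset.univ.filter (fun i => SCV.W i z5 ∈ C) with hW0f
  set Af : Finset (Fin m) := W0f.filter (fun i => ¬ ∃ j, SCV.X i j ∈ C) with hAf
  set Zf : Finset (Fin n) := Finset.univ.filter (fun j => SCV.Z j z5 ∈ C) with hZf
  set Bf : Finset (Fin n) := Zf.filter (fun j => ¬ ∃ i, j ∈ Su i ∧ SCV.X i j ∈ C) with hBf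
  -- (I1): upper bound for the number of followers of core number ≥ 3
  have hG1 : {v : SCV m n | scFollower v ∧ 3 ≤ coreNumber H v}.ncard
      ≤ 4 * m + Pf.card + W0f.card + Zf.card := by
    have he : {v : SCV m n | scFollower v ∧ 3 ≤ coreNumber H v} =
        {v : SCV m n | scFollower v ∧ v ∈ C} := by
      ext v
      simp only [Set.mem_setOf_eq, hCiff]
    rw [he, Set.ncard_eq_toFinset_card', Set.toFinset_setOf]
    set F1 := ((Finset.univ : Finset (Fin m)) ×ˢ
      (Finset.univ.filter (fun q : Fin 5 => 1 ≤ q.val))).image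
        (fun p : Fin m × Fin 5 => SCV.W p.1 p.2) with hF1
    set F2 := Pf.image (fun p : Fin m × Fin n => SCV.X p.1 p.2) with hF2
    set F3 := W0f.image (fun i => SCV.W i z5) with hF3
    set F4 := Zf.image (fun j => SCV.Z j z5) with hF4
    have hsub : Finset.univ.filter (fun v : SCV m n => scFollower v ∧ v ∈ C)
        ⊆ F1 ∪ F2 ∪ F3 ∪ F4 := by
      intro v hv
      simp only [Finset.mem_filter, Finset.mem_univ, true_and] at hv
      obtain ⟨hf, hvC⟩ := hv
      simp only [Finset.mem_union]
      cases v with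
      | X i j =>
        exact Or.inl (Or.inl (Or.inr (Finset.mem_image.2 ⟨(i, j), by simp [hPf, hvC], rfl⟩)))
      | W i q =>
        by_cases h0 : q.val = 0
        · have hq : q = z5 := Fin.ext h0
          subst hq
          exact Or.inl (Or.inr (Finset.mem_image.2 ⟨i, by simp [hW0f, hvC], rfl⟩))
        · refine Or.inl (Or.inl (Or.inl (Finset.mem_image.2 ⟨(i, q), ?_, rfl⟩)))
          simp only [Finset.mem_product, Finset.mem_univ, true_and, Finset.mem_filter]
          omega
      | Z j q =>
        have h0 : q.val = 0 := hf
        have hq : q = z5 := Fin.ext h0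
        subst hq
        exact Or.inr (Finset.mem_image.2 ⟨j, by simp [hZf, hvC], rfl⟩)
    have hF1card : F1.card = 4 * m := by
      rw [hF1, Finset.card_image_of_injective _ (by
        intro a b hab
        simp only [SCV.W.injEq] at hab
        exact Prod.ext hab.1 hab.2 : Function.Injective (fun p : Fin m × Fin 5 => SCV.W p.1 p.2))]
      rw [Finset.card_product]
      have : (Finset.univ.filter (fun q : Fin 5 => 1 ≤ q.val)).card = 4 := by decide
      simp [this]
      omega
    calc (Finset.univ.filter (fun v : SCV m n => scFollower v ∧ v ∈ C)).card
        ≤ (F1 ∪ F2 ∪ F3 ∪ F4).card := Finset.card_le_card hsub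
      _ ≤ F1.card + F2.card + F3.card + F4.card := by
          calc (F1 ∪ F2 ∪ F3 ∪ F4).card ≤ (F1 ∪ F2 ∪ F3).card + F4.card := Finset.card_union_le _ _
            _ ≤ (F1 ∪ F2).card + F3.card + F4.card := by
                have := Finset.card_union_le (F1 ∪ F2) F3
                omega
            _ ≤ F1.card + F2.card + F3.card + F4.card := by
                have := Finset.card_union_le F1 F2
                omega
      _ ≤ 4 * m + Pf.card + W0f.card + Zf.card := by
          have e2 : F2.card ≤ Pf.card := hF2 ▸ Finset.card_image_le
          have e3 : F3.card ≤ W0f.card := hF3 ▸ Finset.card_image_le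
          have e4 : F4.card ≤ Zf.card := hF4 ▸ Finset.card_image_le
          rw [hF1card]
          omega
  -- deficiency sum upper bound
  have hdeltasum : ∑ v ∈ Finset.univ.filter (· ∈ C),
      (3 - (C ∩ (scGraph Su).neighborSet v).ncard) ≤ 2 * t := by
    have hpt : ∀ v ∈ C, (3 - (C ∩ (scGraph Su).neighborSet v).ncard) ≤
        ((SimpleGraph.fromEdgeSet (↑W : Set (Sym2 (SCV m n)))).neighborSet v).ncard := by
      intro v hv
      have h3 := hC v hv
      have hsplit : (C ∩ H.neighborSet v).ncard ≤
          (C ∩ (scGraph Su).neighborSet v).ncard +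
          ((SimpleGraph.fromEdgeSet (↑W : Set (Sym2 (SCV m n)))).neighborSet v).ncard := by
        have hsub2 : C ∩ H.neighborSet v ⊆
            (C ∩ (scGraph Su).neighborSet v) ∪
            ((SimpleGraph.fromEdgeSet (↑W : Set (Sym2 (SCV m n)))).neighborSet v) := by
          intro x hx
          obtain ⟨hx1, hx2⟩ := hx
          rcases (SimpleGraph.sup_adj _ _ _ _).1 hx2 with h | h
          · exact Or.inl ⟨hx1, h⟩
          · exact Or.inr h
        calc (C ∩ H.neighborSet v).ncard
            ≤ ((C ∩ (scGraph Su).neighborSet v) ∪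
              ((SimpleGraph.fromEdgeSet (↑W : Set (Sym2 (SCV m n)))).neighborSet v)).ncard :=
              Set.ncard_le_ncard hsub2 (Set.toFinite _)
          _ ≤ _ := Set.ncard_union_le _ _
      omega
    calc ∑ v ∈ Finset.univ.filter (· ∈ C), (3 - (C ∩ (scGraph Su).neighborSet v).ncard)
        ≤ ∑ v ∈ Finset.univ.filter (· ∈ C),
          ((SimpleGraph.fromEdgeSet (↑W : Set (Sym2 (SCV m n)))).neighborSet v).ncard :=
          Finset.sum_le_sum (fun v hv => hpt v (by simpa using hv))
      _ ≤ ∑ v, ((SimpleGraph.fromEdgeSet (↑W : Set (Sym2 (SCV m n)))).neighborSet v).ncard :=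
          Finset.sum_le_sum_of_subset (Finset.filter_subset _ _)
      _ = 2 * W.card := hshake W hdiag
      _ ≤ 2 * t := by omega
  -- deficiency sum lower bound
  have hlower : 2 * Rf.card + Af.card + Bf.card ≤
      ∑ v ∈ Finset.univ.filter (· ∈ C), (3 - (C ∩ (scGraph Su).neighborSet v).ncard) := by
    set g : SCV m n → ℕ := fun v => 3 - (C ∩ (scGraph Su).neighborSet v).ncard with hg
    set emb : (Fin m × Fin n) ⊕ (Fin m ⊕ Fin n) → SCV m n :=
      Sum.elim (fun p => SCV.X p.1 p.2) (Sum.elim (fun i => SCV.W i z5) (fun j => SCV.Z j z5)) with hemb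
    have hinj : Function.Injective emb := by
      intro x y hxy
      rcases x with p | i | j <;> rcases y with p' | i' | j' <;>
        simp only [hemb, Sum.elim_inl, Sum.elim_inr] at hxy <;>
        first
          | (simp only [SCV.X.injEq] at hxy; exact congrArg Sum.inl (Prod.ext hxy.1 hxy.2))
          | (simp only [SCV.W.injEq] at hxy; exact congrArg (Sum.inr ∘ Sum.inl) hxy.1)
          | (simp only [SCV.Z.injEq] at hxy; exact congrArg (Sum.inr ∘ Sum.inr) hxy.1)
          | (exfalso; cases hxy)
    have h1 : ∑ x ∈ (Pf.disjSum (Af.disjSum Bf)), g (emb x) ≤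
        ∑ v ∈ Finset.univ.filter (· ∈ C), g v := by
      rw [← Finset.sum_image (fun x _ y _ h => hinj h)]
      apply Finset.sum_le_sum_of_subset
      intro v hv
      obtain ⟨x, hx, rfl⟩ := Finset.mem_image.1 hv
      simp only [Finset.mem_filter, Finset.mem_univ, true_and]
      rcases x with p | i | j
      · rw [Finset.inl_mem_disjSum] at hx
        have hp := (Finset.mem_filter.1 hx).2
        simpa [hemb] using hp
      · rw [Finset.inr_mem_disjSum, Finset.inl_mem_disjSum] at hx
        have hp := (Finset.mem_filter.1 ((Finset.filter_subset _ _) hx)).2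
        simpa [hemb] using hp
      · rw [Finset.inr_mem_disjSum, Finset.inr_mem_disjSum] at hx
        have hp := (Finset.mem_filter.1 ((Finset.filter_subset _ _) hx)).2
        simpa [hemb] using hp
    rw [Finset.sum_disjSum, Finset.sum_disjSum] at h1
    simp only [hemb, Sum.elim_inl, Sum.elim_inr] at h1
    -- bound for the A-part
    have hApair : ∀ i ∈ Af, 1 ≤ g (SCV.W i z5) := by
      intro i hi
      obtain ⟨hiW, hnoX⟩ := Finset.mem_filter.1 hi
      have hiC : SCV.W i z5 ∈ C := (Finset.mem_filter.1 hiW).2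
      have hnoX' : ¬ ∃ j, SCV.X i j ∈ C := hnoX
      have hsub2 : C ∩ (scGraph Su).neighborSet (SCV.W i z5) ⊆
          {SCV.W i ⟨1, by omega⟩, SCV.W i ⟨4, by omega⟩} := by
        intro w hw
        rcases nbhd_W0 Su i hw.2 with h | ⟨j, rfl⟩
        · exact h
        · exact absurd ⟨j, hw.1⟩ hnoX'
      have hcard : (C ∩ (scGraph Su).neighborSet (SCV.W i z5)).ncard ≤ 2 := by
        calc _ ≤ ({SCV.W i ⟨1, by omega⟩, SCV.W i ⟨4, by omega⟩} : Set (SCV m n)).ncard :=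
              Set.ncard_le_ncard hsub2 (Set.toFinite _)
          _ ≤ 2 := le_trans (Set.ncard_insert_le _ _) (by simp)
      simp only [hg]
      omega
    have hA : Af.card ≤ ∑ i ∈ Af, g (SCV.W i z5) := by
      calc Af.card = ∑ _i ∈ Af, 1 := by simp
        _ ≤ _ := Finset.sum_le_sum hApair
    -- bound for the B-part
    have hBpair : ∀ j ∈ Bf, 1 ≤ g (SCV.Z j z5) := by
      intro j hj
      obtain ⟨hjZ, hnoX⟩ := Finset.mem_filter.1 hj
      have hnoX' : ¬ ∃ i, j ∈ Su i ∧ SCV.X i j ∈ C := hnoX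
      have hsub2 : C ∩ (scGraph Su).neighborSet (SCV.Z j z5) ⊆
          {SCV.Z j ⟨1, by omega⟩, SCV.Z j ⟨4, by omega⟩} := by
        intro w hw
        rcases nbhd_Z0 Su j hw.2 with h | ⟨i, rfl, hsi⟩
        · exact h
        · exact absurd ⟨i, hsi, hw.1⟩ hnoX'
      have hcard : (C ∩ (scGraph Su).neighborSet (SCV.Z j z5)).ncard ≤ 2 := by
        calc _ ≤ ({SCV.Z j ⟨1, by omega⟩, SCV.Z j ⟨4, by omega⟩} : Set (SCV m n)).ncard :=
              Set.ncard_le_ncard hsub2 (Set.toFinite _)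
          _ ≤ 2 := le_trans (Set.ncard_insert_le _ _) (by simp)
      simp only [hg]
      omega
    have hB : Bf.card ≤ ∑ j ∈ Bf, g (SCV.Z j z5) := by
      calc Bf.card = ∑ _j ∈ Bf, 1 := by simp
        _ ≤ _ := Finset.sum_le_sum hBpair
    -- bound for the X-part
    have hXsplit : ∑ p ∈ Pf, g (SCV.X p.1 p.2) =
        ∑ i : Fin m, ∑ j ∈ Finset.univ.filter (fun j : Fin n => SCV.X i j ∈ C), g (SCV.X i j) := by
      rw [hPf, Finset.sum_filter, Fintype.sum_prod_type]
      refine Finset.sum_congr rfl fun i _ => ?_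
      rw [Finset.sum_filter]
    have hXrow : ∀ i ∈ Rf, 2 ≤ ∑ j ∈ Finset.univ.filter (fun j : Fin n => SCV.X i j ∈ C), g (SCV.X i j) := by
      intro i hi
      have hex : ∃ j, SCV.X i j ∈ C := (Finset.mem_filter.1 hi).2
      exact row_lemma Su C hex
    have hX : 2 * Rf.card ≤ ∑ p ∈ Pf, g (SCV.X p.1 p.2) := by
      rw [hXsplit]
      calc 2 * Rf.card = ∑ _i ∈ Rf, 2 := by
            rw [Finset.sum_const, smul_eq_mul]
            ring
        _ ≤ ∑ i ∈ Rf, ∑ j ∈ Finset.univ.filter (fun j : Fin n => SCV.X i j ∈ C), g (SCV.X i j) :=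
            Finset.sum_le_sum hXrow
        _ ≤ ∑ i : Fin m, ∑ j ∈ Finset.univ.filter (fun j : Fin n => SCV.X i j ∈ C), g (SCV.X i j) :=
            Finset.sum_le_sum_of_subset (Finset.subset_univ _)
    exact le_trans (by omega) h1
  -- remaining counting facts
  have h2 : Pf.card ≤ Rf.card * n := by
    have hsub : Pf ⊆ Rf ×ˢ Finset.univ := by
      intro p hp
      have hp' := (Finset.mem_filter.1 hp).2
      simp only [Finset.mem_product, Finset.mem_univ, and_true]
      exact Finset.mem_filter.2 ⟨Finset.mem_univ _, ⟨p.2, hp'⟩⟩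
    calc Pf.card ≤ (Rf ×ˢ Finset.univ).card := Finset.card_le_card hsub
      _ = Rf.card * n := by rw [Finset.card_product]; simp
  have h3 : Zf.card ≤ n := by
    calc Zf.card ≤ (Finset.univ : Finset (Fin n)).card := Finset.card_filter_le _ _
      _ = n := by simp
  have h4 : W0f.card ≤ Rf.card + Af.card := by
    have hsub : W0f ⊆ Rf ∪ Af := by
      intro i hi
      by_cases hex : ∃ j, SCV.X i j ∈ C
      · exact Finset.mem_union_left _ (Finset.mem_filter.2 ⟨Finset.mem_univ _, hex⟩)
      · exact Finset.mem_union_right _ (Finset.mem_filter.2 ⟨hi, hex⟩)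
    calc W0f.card ≤ (Rf ∪ Af).card := Finset.card_le_card hsub
      _ ≤ Rf.card + Af.card := Finset.card_union_le _ _
  have h5 : 2 * Rf.card + Af.card + Bf.card ≤ 2 * t := le_trans hlower hdeltasum
  have h1 : 4 * m + (n * t + n) + t ≤ 4 * m + Pf.card + W0f.card + Zf.card := by
    have := le_trans hgood hG1
    have hmul : n * (t + 1) = n * t + n := by ring
    omega
  -- arithmetic
  have hrt : Rf.card ≤ t := by omega
  have hkey : Bf.card = 0 ∧ n ≤ Zf.card := by
    set d := t - Rf.card with hd
    have hsum : Rf.card + d = t := by omega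
    have hmul : n * t = n * Rf.card + n * d := by
      rw [← hsum, Nat.mul_add]
    have hE : 3 * d ≤ n * d := Nat.mul_le_mul_right d hn
    have h2' : Pf.card ≤ n * Rf.card := by
      rw [Nat.mul_comm]
      exact h2
    generalize hA1 : n * t = A at hmul h1
    generalize hB1 : n * Rf.card = B at hmul h2'
    generalize hE1 : n * d = E at hmul hE
    omega
  obtain ⟨hB0, hZn⟩ := hkey
  have hZall : ∀ j : Fin n, SCV.Z j z5 ∈ C := by
    have hZu : Zf = Finset.univ := by
      apply Finset.eq_univ_of_card
      have : Zf.card = n := le_antisymm h3 hZn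
      simpa using this
    intro j
    have : j ∈ Zf := hZu ▸ Finset.mem_univ j
    exact (Finset.mem_filter.1 this).2
  have hcov : ∀ j : Fin n, ∃ i, j ∈ Su i ∧ SCV.X i j ∈ C := by
    intro j
    by_contra hno
    have hjB : j ∈ Bf := Finset.mem_filter.2
      ⟨Finset.mem_filter.2 ⟨Finset.mem_univ _, hZall j⟩, hno⟩
    have := Finset.card_eq_zero.1 hB0
    rw [this] at hjB
    exact absurd hjB (Finset.notMem_empty _)
  refine ⟨Rf, hrt, fun j => ?_⟩
  obtain ⟨i, hsi, hxc⟩ := hcov j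
  exact ⟨i, Finset.mem_filter.2 ⟨Finset.mem_univ _, ⟨j, hxc⟩⟩, hsi⟩
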